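/- Let m, n be dual quaternions with m·conj(m) = 0 and n + conj(n) a scalar. Then (mn)·conj(mn) = 0, (nm)·conj(nm) = 0, m·conj(mn) + (mn)·conj(m) = 0, and m·conj(nm) + (nm)·conj(m) = 0. Consequently (by the null-line criterion), the lines [m] ∨ [mn] and [m] ∨ [nm] are null lines. -/

import Mathlib

open Quaternion TrivSqZeroExt

/-- The complexified dual quaternions. -/
noncomputable abbrev DHC := DualNumber (Quaternion ℂ)

instance : IsScalarTower ℂ ℍ[ℂ] ℍ[ℂ] := @IsScalarTower.right ℂ ℍ[ℂ] _ _ Quaternion.algebra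

instance : IsScalarTower ℂ ℍ[ℂ]ᵐᵒᵖ ℍ[ℂ] :=
  ⟨fun a b c => by
    change c * (a • b.unop) = a • (c * b.unop)
    exact @mul_smul_comm ℂ ℍ[ℂ] _ _ (@Algebra.to_smulCommClass ℂ ℍ[ℂ] _ _ Quaternion.algebra) a c b.unop⟩

/-- Dual quaternion conjugation (fixing the complex scalar unit and `ε`). -/
noncomputable def dconj (q : DHC) : DHC := (star q.fst, star q.snd)

@[simp] lemma dconj_fst (q : DHC) : (dconj q).fst = star q.fst := rfl

@[simp] lemma dconj_snd (q : DHC) : (dconj q).snd = star q.snd := rfl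

lemma dconj_mul (p q : DHC) : dconj (p * q) = dconj q * dconj p := by
  refine TrivSqZeroExt.ext ?_ ?_
  · simp [dconj_fst, star_mul]
  · simp [dconj_fst, dconj_snd, star_mul, smul_eq_mul, MulOpposite.smul_eq_mul_unop]
    rw [star_add (R := ℍ[ℂ]), star_mul (R := ℍ[ℂ]), star_mul (R := ℍ[ℂ]), add_comm]

lemma dconj_add (p q : DHC) : dconj (p + q) = dconj p + dconj q := by
  refine TrivSqZeroExt.ext ?_ ?_ <;> simp [dconj_fst, dconj_snd] <;> exact star_add (R := ℍ[ℂ]) _ _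

lemma dconj_smul (a : ℂ) (q : DHC) : dconj (a • q) = a • dconj q := by
  refine TrivSqZeroExt.ext ?_ ?_ <;> simp [dconj_fst, dconj_snd, Quaternion.star_smul]

/-- `q * dconj q` is central in `DHC`. -/
lemma norm_central (q r : DHC) : r * (q * dconj q) = (q * dconj q) * r := by
  set N := q * dconj q with hN
  have hf : N.fst = ((q.fst * star q.fst).re : Quaternion ℂ) := by
    simp only [hN, fst_mul, dconj]
    exact Quaternion.mul_star_eq_coe q.fst
  have key : q.fst * star q.snd + q.snd * star q.fst
      = ((2 * (q.fst * star q.snd).re : ℂ) : Quaternion ℂ) := by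
    have h := Quaternion.self_add_star' (q.fst * star q.snd)
    rwa [star_mul, star_star] at h
  have hs : N.snd = ((2 * (q.fst * star q.snd).re : ℂ) : Quaternion ℂ) := by
    simp only [hN, snd_mul, fst_mul, dconj, smul_eq_mul,
      MulOpposite.smul_eq_mul_unop, MulOpposite.unop_op]
    exact key
  refine TrivSqZeroExt.ext ?_ ?_
  · simp only [fst_mul, hf, Quaternion.coe_commutes]
  · simp only [snd_mul, smul_eq_mul, MulOpposite.smul_eq_mul_unop, MulOpposite.unop_op,
      hf, hs, Quaternion.coe_commutes]
    exact add_comm _ _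

set_option maxHeartbeats 1000000
set_option synthInstance.maxHeartbeats 400000

lemma quad_vanish (m x : DHC) (h1 : m * dconj m = 0) (h2 : x * dconj x = 0)
    (h3 : m * dconj x + x * dconj m = 0) (a b : ℂ) :
    (a • m + b • x) * dconj (a • m + b • x) = 0 := by
  have sm : ∀ (r : ℂ) (z : DHC), r • z = algebraMap ℂ DHC r * z := fun r z =>
    Algebra.smul_def r z
  set A := algebraMap ℂ DHC a with hA
  set B := algebraMap ℂ DHC b with hB
  have swapA : ∀ z y : DHC, z * (A * y) = A * (z * y) := fun z y => by
    rw [← mul_assoc, hA, ← Algebra.commutes a z, mul_assoc]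
  have swapB : ∀ z y : DHC, z * (B * y) = B * (z * y) := fun z y => by
    rw [← mul_assoc, hB, ← Algebra.commutes b z, mul_assoc]
  rw [dconj_add, dconj_smul, dconj_smul, sm, sm, sm, sm]
  simp only [mul_add, add_mul, mul_assoc]
  rw [swapA m (dconj m), swapB m (dconj x), swapA x (dconj m), swapB x (dconj x),
    h1, h2, mul_zero, mul_zero, mul_zero, mul_zero, add_zero, zero_add]
  rw [swapA B (x * dconj m), ← mul_add, ← mul_add,
    add_comm (x * dconj m) (m * dconj x), h3, mul_zero, mul_zero]

/-- If `m conj m = 0` and `n + conj n` is a scalar, then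
`(mn) conj(mn) = (nm) conj(nm) = m conj(mn) + (mn) conj m
= m conj(nm) + (nm) conj m = 0`; consequently, by the null-line criterion, the
lines `[m] ∨ [mn]` and `[m] ∨ [nm]` are null lines. -/
theorem null_lines_through_m (m n : DHC)
    (hm : m * dconj m = 0) (hn : ∃ c : ℂ, n + dconj n = algebraMap ℂ DHC c) :
    (m * n) * dconj (m * n) = 0 ∧
    (n * m) * dconj (n * m) = 0 ∧
    m * dconj (m * n) + (m * n) * dconj m = 0 ∧
    m * dconj (n * m) + (n * m) * dconj m = 0 ∧
    (∀ a b : ℂ, (a • m + b • (m * n)) * dconj (a • m + b • (m * n)) = 0) ∧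
    (∀ a b : ℂ, (a • m + b • (n * m)) * dconj (a • m + b • (n * m)) = 0) := by
  obtain ⟨c, hc⟩ := hn
  have g1 : (m * n) * dconj (m * n) = 0 := by
    rw [dconj_mul]
    calc m * n * (dconj n * dconj m) = m * ((n * dconj n) * dconj m) := by
          rw [mul_assoc, mul_assoc]
      _ = m * (dconj m * (n * dconj n)) := by rw [← norm_central]
      _ = (m * dconj m) * (n * dconj n) := by rw [mul_assoc]
      _ = 0 := by rw [hm, zero_mul]
  have g2 : (n * m) * dconj (n * m) = 0 := by
    rw [dconj_mul]
    calc n * m * (dconj m * dconj n) = n * ((m * dconj m) * dconj n) := by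
          rw [mul_assoc, mul_assoc]
      _ = 0 := by rw [hm, zero_mul, mul_zero]
  have g3 : m * dconj (m * n) + (m * n) * dconj m = 0 := by
    rw [dconj_mul]
    have e : m * (dconj n * dconj m) + m * n * dconj m
        = m * ((n + dconj n) * dconj m) := by
      rw [add_mul, mul_add, mul_assoc, add_comm]
    rw [e, hc, Algebra.commutes, ← mul_assoc, hm, zero_mul]
  have g4 : m * dconj (n * m) + (n * m) * dconj m = 0 := by
    rw [dconj_mul]
    calc m * (dconj m * dconj n) + n * m * dconj m
        = (m * dconj m) * dconj n + n * (m * dconj m) := by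
          rw [mul_assoc, mul_assoc]
      _ = 0 := by rw [hm, zero_mul, mul_zero, add_zero]
  exact ⟨g1, g2, g3, g4, fun a b => quad_vanish m (m * n) hm g1 g3 a b,
    fun a b => quad_vanish m (n * m) hm g2 g4 a b⟩
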